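/- Let B > 0, -1 ≤ C < 1, ε ≤ C, and M = ((1/2)(1-C)B)^(1/(1-ε)). Suppose u : (-1,1) → ℝ is C² on [0,1) and satisfies u(t)·u''(t) ≥ B·|u(t)|^(1+ε) + C·(u'(t))² for all 0 < t < 1. If u(0) > 0 and u'(0) ≥ 0, then sup_{0 ≤ y < 1} u(y) > M. -/

import Mathlib

open Set Real Filter

theorem stmt19 (B C ε : ℝ) (hB : 0 < B) (hC1 : -1 ≤ C) (hC2 : C < 1) (hεC : ε ≤ C)
    (M : ℝ) (hM : M = ((1 / 2) * (1 - C) * B) ^ (1 / (1 - ε))) (u : ℝ → ℝ)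
    (hreg : ContDiffOn ℝ 2 u (Set.Ico (0 : ℝ) 1))
    (hineq : ∀ t ∈ Set.Ioo (0 : ℝ) 1,
      u t * derivWithin (derivWithin u (Set.Ico (0 : ℝ) 1)) (Set.Ico (0 : ℝ) 1) t ≥
        B * |u t| ^ (1 + ε) + C * (derivWithin u (Set.Ico (0 : ℝ) 1) t) ^ 2)
    (h0 : 0 < u 0) (h0' : 0 ≤ derivWithin u (Set.Ico (0 : ℝ) 1) 0) :
    ∃ y ∈ Set.Ico (0 : ℝ) 1, M < u y := by
  by_contra hcon
  push_neg at hcon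
  set s : Set ℝ := Set.Ico (0:ℝ) 1 with hsdef
  set v : ℝ → ℝ := derivWithin u s with hvdef
  set v2 : ℝ → ℝ := derivWithin v s with hv2def
  have h1C : (0:ℝ) < 1 - C := by linarith
  have h1ε : (0:ℝ) < 1 - ε := by linarith
  have hbase : (0:ℝ) < 1/2 * (1 - C) * B := by
    have := mul_pos (mul_pos (by norm_num : (0:ℝ) < 1/2) h1C) hB
    linarith
  have hMpos : 0 < M := by
    rw [hM]; exact Real.rpow_pos_of_pos hbase _
  have hsU : UniqueDiffOn ℝ s := uniqueDiffOn_Ico 0 1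
  have hucont : ContinuousOn u s := hreg.continuousOn
  have hdu : DifferentiableOn ℝ u s := hreg.differentiableOn (by norm_num)
  have hv1 : ContDiffOn ℝ 1 v s := hreg.derivWithin hsU (by norm_num)
  have hvcont : ContinuousOn v s := hv1.continuousOn
  have hdv : DifferentiableOn ℝ v s := hv1.differentiableOn one_ne_zero
  have hmem : ∀ t ∈ Set.Ioo (0:ℝ) 1, s ∈ nhds t := fun t ht => Ico_mem_nhds ht.1 ht.2
  have hu' : ∀ t ∈ Set.Ioo (0:ℝ) 1, HasDerivAt u (v t) t := fun t ht =>
    ((hdu t (Set.Ioo_subset_Ico_self ht)).hasDerivWithinAt).hasDerivAt (hmem t ht)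
  have hv' : ∀ t ∈ Set.Ioo (0:ℝ) 1, HasDerivAt v (v2 t) t := fun t ht =>
    ((hdv t (Set.Ioo_subset_Ico_self ht)).hasDerivWithinAt).hasDerivAt (hmem t ht)
  set c : ℝ := B * M ^ (ε - C) with hcdef
  have hcpos : 0 < c := mul_pos hB (Real.rpow_pos_of_pos hMpos _)
  -- key step: if u > 0 on [0,b], then v t * u t ^ (-C) ≥ c * t there
  have keyg : ∀ b ∈ Set.Ioo (0:ℝ) 1, (∀ t ∈ Set.Icc (0:ℝ) b, 0 < u t) →
      ∀ t ∈ Set.Icc (0:ℝ) b, c * t ≤ v t * u t ^ (-C) := by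
    intro b hb hupos
    have hIb : Set.Icc (0:ℝ) b ⊆ s := fun x hx => ⟨hx.1, lt_of_le_of_lt hx.2 hb.2⟩
    have hIoo : Set.Ioo (0:ℝ) b ⊆ Set.Ioo (0:ℝ) 1 := Set.Ioo_subset_Ioo le_rfl hb.2.le
    set g : ℝ → ℝ := fun t => v t * u t ^ (-C) - c * t with hgdef
    have hder : ∀ x ∈ Set.Ioo (0:ℝ) b,
        HasDerivAt g (v2 x * u x ^ (-C) + v x * (v x * (-C) * u x ^ (-C - 1)) - c) x := by
      intro x hx
      have hx1 : x ∈ Set.Ioo (0:ℝ) 1 := hIoo hx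
      have hux : 0 < u x := hupos x (Set.Ioo_subset_Icc_self hx)
      have h1 : HasDerivAt (fun y => u y ^ (-C)) (v x * (-C) * u x ^ (-C - 1)) x :=
        (hu' x hx1).rpow_const (Or.inl hux.ne')
      have h2 := (hv' x hx1).mul h1
      have h3 : HasDerivAt (fun t : ℝ => c * t) (c * 1) x := (hasDerivAt_id x).const_mul c
      have h4 := h2.sub h3
      rw [mul_one] at h4
      exact h4
    have hmono : MonotoneOn g (Set.Icc (0:ℝ) b) := by
      apply monotoneOn_of_deriv_nonneg (convex_Icc 0 b)
      · exact (((hvcont.mono hIb).mul ((hucont.mono hIb).rpow_const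
          (fun x hx => Or.inl (hupos x hx).ne'))).sub (continuousOn_const.mul continuousOn_id))
      · intro x hx
        rw [interior_Icc] at hx
        exact (hder x hx).differentiableAt.differentiableWithinAt
      · intro x hx
        rw [interior_Icc] at hx
        have hx1 : x ∈ Set.Ioo (0:ℝ) 1 := hIoo hx
        have hux : 0 < u x := hupos x (Set.Ioo_subset_Icc_self hx)
        rw [(hder x hx).deriv]
        have hpow : u x ^ (-C) = u x ^ (-C - 1) * u x := by
          rw [← Real.rpow_add_one hux.ne' (-C - 1)]; norm_num
        have hppos : (0:ℝ) < u x ^ (-C - 1) := Real.rpow_pos_of_pos hux _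
        have hi := hineq x hx1
        rw [abs_of_pos hux] at hi
        have hchain : c ≤ u x ^ (-C - 1) * (u x * v2 x - C * v x ^ 2) := by
          have hle : M ^ (ε - C) ≤ u x ^ (ε - C) :=
            Real.rpow_le_rpow_of_nonpos hux
              (hcon x (Set.Ioo_subset_Ico_self hx1)) (by linarith)
          have e1 : u x ^ (-C - 1) * (B * u x ^ (1 + ε)) = B * u x ^ (ε - C) := by
            rw [show ε - C = (-C - 1) + (1 + ε) by ring, Real.rpow_add hux (-C - 1) (1 + ε)]
            exact mul_left_comm (u x ^ (-C - 1)) B (u x ^ (1 + ε))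
          have e2 : B * M ^ (ε - C) ≤ B * u x ^ (ε - C) :=
            mul_le_mul_of_nonneg_left hle hB.le
          have e3 : u x ^ (-C - 1) * (B * u x ^ (1 + ε)) ≤
              u x ^ (-C - 1) * (u x * v2 x - C * v x ^ 2) :=
            mul_le_mul_of_nonneg_left (by linarith) hppos.le
          calc c = B * M ^ (ε - C) := rfl
            _ ≤ B * u x ^ (ε - C) := e2
            _ = u x ^ (-C - 1) * (B * u x ^ (1 + ε)) := e1.symm
            _ ≤ _ := e3
        have heq : v2 x * u x ^ (-C) + v x * (v x * (-C) * u x ^ (-C - 1)) - c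
            = u x ^ (-C - 1) * (u x * v2 x - C * v x ^ 2) - c := by
          rw [hpow]; ring
        rw [heq]; linarith
    intro t ht
    have hg0 : 0 ≤ g 0 := by
      have : (0:ℝ) ≤ v 0 * u 0 ^ (-C) :=
        mul_nonneg h0' (Real.rpow_pos_of_pos h0 _).le
      simpa [hgdef] using this
    have := hmono (Set.left_mem_Icc.mpr (le_trans ht.1 ht.2)) ht ht.1
    have : 0 ≤ g t := le_trans hg0 this
    simpa [hgdef, sub_nonneg] using this
  -- positivity: u > u 0 / 2 on [0,1)
  have upos : ∀ t ∈ s, u 0 / 2 < u t := by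
    by_contra hneg
    push_neg at hneg
    obtain ⟨t0, ht0s, ht0⟩ := hneg
    set K : Set ℝ := {t | t ∈ s ∧ u t ≤ u 0 / 2} with hKdef
    have hKne : K.Nonempty := ⟨t0, ht0s, ht0⟩
    have hKbd : BddBelow K := ⟨0, fun x hx => hx.1.1⟩
    set t1 := sInf K with ht1def
    have ht1nn : 0 ≤ t1 := le_csInf hKne fun x hx => hx.1.1
    have ht1lt : t1 < 1 := lt_of_le_of_lt (csInf_le hKbd ⟨ht0s, ht0⟩) ht0s.2
    have ht1s : t1 ∈ s := ⟨ht1nn, ht1lt⟩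
    have ht1cl : t1 ∈ closure K := csInf_mem_closure hKne hKbd
    have hne : (nhdsWithin t1 K).NeBot := mem_closure_iff_nhdsWithin_neBot.mp ht1cl
    have hKs : K ⊆ s := fun x hx => hx.1
    have hut1 : u t1 ≤ u 0 / 2 := by
      have htd : Tendsto u (nhdsWithin t1 K) (nhds (u t1)) :=
        (hucont t1 ht1s).mono hKs
      exact le_of_tendsto htd (eventually_mem_nhdsWithin.mono fun x hx => hx.2)
    have ht1pos : 0 < t1 := by
      rcases lt_or_eq_of_le ht1nn with h | h
      · exact h
      · exfalso; rw [← h] at hut1; linarith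
    -- below t1, u > u 0 / 2
    have hbelow : ∀ t, 0 ≤ t → t < t1 → u 0 / 2 < u t := by
      intro t htn htl
      by_contra hle
      push_neg at hle
      have : t1 ≤ t := csInf_le hKbd ⟨⟨htn, lt_trans htl ht1lt⟩, hle⟩
      linarith
    -- for every b < t1, u is monotone on [0,b], so u b ≥ u 0
    have hmonu : ∀ b ∈ Set.Ioo (0:ℝ) t1, u 0 ≤ u b := by
      intro b hb
      have hb1 : b ∈ Set.Ioo (0:ℝ) 1 := ⟨hb.1, lt_trans hb.2 ht1lt⟩
      have hupos : ∀ t ∈ Set.Icc (0:ℝ) b, 0 < u t := fun t ht =>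
        lt_trans (by linarith) (hbelow t ht.1 (lt_of_le_of_lt ht.2 hb.2))
      have hkey := keyg b hb1 hupos
      have hIb : Set.Icc (0:ℝ) b ⊆ s := fun x hx => ⟨hx.1, lt_of_le_of_lt hx.2 hb1.2⟩
      have : MonotoneOn u (Set.Icc (0:ℝ) b) := by
        apply monotoneOn_of_deriv_nonneg (convex_Icc 0 b) (hucont.mono hIb)
        · intro x hx
          rw [interior_Icc] at hx
          exact (hu' x ⟨hx.1, lt_trans hx.2 hb1.2⟩).differentiableAt.differentiableWithinAt
        · intro x hx
          rw [interior_Icc] at hx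
          have hx1 : x ∈ Set.Ioo (0:ℝ) 1 := ⟨hx.1, lt_trans hx.2 hb1.2⟩
          rw [(hu' x hx1).deriv]
          have h1 := hkey x (Set.Ioo_subset_Icc_self hx)
          have h2 : 0 ≤ c * x := mul_nonneg hcpos.le hx.1.le
          have hp : 0 < u x ^ (-C) :=
            Real.rpow_pos_of_pos (hupos x (Set.Ioo_subset_Icc_self hx)) _
          exact (mul_nonneg_iff_of_pos_right hp).mp (by linarith)
      exact this (Set.left_mem_Icc.mpr hb.1.le) (Set.right_mem_Icc.mpr hb.1.le) hb.1.le
    -- take limit b → t1⁻ : u t1 ≥ u 0, contradiction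
    have hlim : u 0 ≤ u t1 := by
      have hIoos : Set.Ioo (0:ℝ) t1 ⊆ s := fun x hx =>
        ⟨hx.1.le, lt_trans hx.2 ht1lt⟩
      have hclI : t1 ∈ closure (Set.Ioo (0:ℝ) t1) := by
        rw [closure_Ioo (ne_of_lt ht1pos)]
        exact Set.right_mem_Icc.mpr ht1pos.le
      have hneI : (nhdsWithin t1 (Set.Ioo (0:ℝ) t1)).NeBot :=
        mem_closure_iff_nhdsWithin_neBot.mp hclI
      have htd : Tendsto u (nhdsWithin t1 (Set.Ioo (0:ℝ) t1)) (nhds (u t1)) :=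
        (hucont t1 ht1s).mono hIoos
      exact ge_of_tendsto htd (eventually_mem_nhdsWithin.mono fun x hx => hmonu x hx)
    linarith
  -- main estimate
  have hMε : M ^ (1 - ε) = 1/2 * (1 - C) * B := by
    rw [hM, ← Real.rpow_mul hbase.le, one_div_mul_cancel h1ε.ne', Real.rpow_one]
  have hMC : M ^ ((1:ℝ) - C) = M ^ ((1:ℝ) - ε) * M ^ (ε - C) := by
    rw [← Real.rpow_add hMpos]; norm_num
  have hKey : (1 - C) * c / 2 = M ^ ((1:ℝ) - C) := by
    rw [hMC, hMε, hcdef]; ring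
  set r : ℝ := min (u 0 ^ ((1:ℝ) - C) / (2 * M ^ ((1:ℝ) - C))) (1/2) with hrdef
  have hu0p : 0 < u 0 ^ ((1:ℝ) - C) := Real.rpow_pos_of_pos h0 _
  have hMCp : 0 < M ^ ((1:ℝ) - C) := Real.rpow_pos_of_pos hMpos _
  have hrpos : 0 < r := lt_min (by positivity) (by norm_num)
  have hrle : r ≤ 1/2 := min_le_right _ _
  set b : ℝ := Real.sqrt (1 - r) with hbdef
  have hb2 : b ^ 2 = 1 - r := Real.sq_sqrt (by linarith)
  have hbpos : 0 < b := Real.sqrt_pos.mpr (by linarith)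
  have hblt : b < 1 := by nlinarith [hb2, hbpos, hrpos]
  have hb1 : b ∈ Set.Ioo (0:ℝ) 1 := ⟨hbpos, hblt⟩
  have huposb : ∀ t ∈ Set.Icc (0:ℝ) b, 0 < u t := fun t ht =>
    lt_trans (by linarith) (upos t ⟨ht.1, lt_of_le_of_lt ht.2 hblt⟩)
  have hkey := keyg b hb1 huposb
  set φ : ℝ → ℝ := fun t => u t ^ ((1:ℝ) - C) - (1 - C) * c * t ^ 2 / 2 with hφdef
  have hIb : Set.Icc (0:ℝ) b ⊆ s := fun x hx => ⟨hx.1, lt_of_le_of_lt hx.2 hblt⟩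
  have hφder : ∀ x ∈ Set.Ioo (0:ℝ) b,
      HasDerivAt φ (v x * (1 - C) * u x ^ (-C) - (1 - C) * c / 2 * (2 * x ^ 1)) x := by
    intro x hx
    have hx1 : x ∈ Set.Ioo (0:ℝ) 1 := ⟨hx.1, lt_trans hx.2 hblt⟩
    have hux : 0 < u x := huposb x (Set.Ioo_subset_Icc_self hx)
    have h1 : HasDerivAt (fun y => u y ^ ((1:ℝ) - C)) (v x * (1 - C) * u x ^ ((1:ℝ) - C - 1)) x :=
      (hu' x hx1).rpow_const (Or.inl hux.ne')
    rw [show (1:ℝ) - C - 1 = -C by ring] at h1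
    have h2 : HasDerivAt (fun t : ℝ => (1 - C) * c * t ^ 2 / 2)
        ((1 - C) * c / 2 * (2 * x ^ 1)) x := by
      have := (hasDerivAt_pow 2 x).const_mul ((1 - C) * c / 2)
      exact (this.congr_deriv (by norm_num)).congr_of_eventuallyEq
        (Filter.Eventually.of_forall fun t => by ring)
    exact h1.sub h2
  have hφmono : MonotoneOn φ (Set.Icc (0:ℝ) b) := by
    apply monotoneOn_of_deriv_nonneg (convex_Icc 0 b)
    · exact ((hucont.mono hIb).rpow_const (fun x hx => Or.inl (huposb x hx).ne')).sub
        ((continuousOn_const.mul (continuousOn_pow 2)).div_const 2)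
    · intro x hx
      rw [interior_Icc] at hx
      exact (hφder x hx).differentiableAt.differentiableWithinAt
    · intro x hx
      rw [interior_Icc] at hx
      rw [(hφder x hx).deriv]
      have h1 := hkey x (Set.Ioo_subset_Icc_self hx)
      have : v x * (1 - C) * u x ^ (-C) - (1 - C) * c / 2 * (2 * x ^ 1)
          = (1 - C) * (v x * u x ^ (-C) - c * x) := by ring
      rw [this]
      exact mul_nonneg h1C.le (by linarith)
  have hφineq := hφmono (Set.left_mem_Icc.mpr hbpos.le)
    (Set.right_mem_Icc.mpr hbpos.le) hbpos.le
  -- unfold: u b ^ (1-C) ≥ u 0 ^ (1-C) + M^(1-C) * b^2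
  have hstep : u 0 ^ ((1:ℝ) - C) + M ^ ((1:ℝ) - C) * b ^ 2 ≤ u b ^ ((1:ℝ) - C) := by
    have h1 : φ 0 ≤ φ b := hφineq
    have h2 : φ 0 = u 0 ^ ((1:ℝ) - C) := by simp [hφdef]
    have h3 : φ b = u b ^ ((1:ℝ) - C) - M ^ ((1:ℝ) - C) * b ^ 2 := by
      simp only [hφdef]
      rw [← hKey]; ring
    rw [h2, h3] at h1; linarith
  have hrM : M ^ ((1:ℝ) - C) * r ≤ u 0 ^ ((1:ℝ) - C) / 2 := by
    have : r ≤ u 0 ^ ((1:ℝ) - C) / (2 * M ^ ((1:ℝ) - C)) := min_le_left _ _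
    calc M ^ ((1:ℝ) - C) * r ≤ M ^ ((1:ℝ) - C) * (u 0 ^ ((1:ℝ) - C) / (2 * M ^ ((1:ℝ) - C))) :=
          mul_le_mul_of_nonneg_left this hMCp.le
      _ = u 0 ^ ((1:ℝ) - C) / 2 := by field_simp
  have hub : u b ≤ M := hcon b ⟨hbpos.le, hblt⟩
  have hubp : 0 < u b := huposb b (Set.right_mem_Icc.mpr hbpos.le)
  have hfin : u b ^ ((1:ℝ) - C) ≤ M ^ ((1:ℝ) - C) :=
    Real.rpow_le_rpow hubp.le hub h1C.le
  rw [hb2] at hstep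
  nlinarith [hstep, hrM, hu0p, hMCp]
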